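/- arXiv:math-ph/0007042 — 3 statements merged into one kernel-verified Lean document; each statement's English description precedes it below -/
import Mathlib

section
/- Linearization of the system (3.47): let (a_{nm}) be an N×N array of complex constants, let V₁,…,V_N : ℝ → (k×k complex matrices) be differentiable functions satisfying the linear system V̇_n = Σ_{m=1}^{N} a_{nm} V_m, and let U₁,…,U_N : ℝ → (k×k complex matrices) be differentiable with each U_n(t) invertible and U̇_n = V_n U_n. Then each U_n is twice differentiable and satisfies Ü_n = U̇_n U_n⁻¹ U̇_n + Σ_{m=1}^{N} a_{nm} U̇_m U_m⁻¹ U_n. -/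
open Matrix

attribute [local instance] Matrix.normedAddCommGroup Matrix.normedSpace

noncomputable section

private theorem entry_hasDerivAt {k : ℕ} {A A' : ℝ → Matrix (Fin k) (Fin k) ℂ} {t : ℝ}
    (hA : HasDerivAt A (A' t) t) (i j : Fin k) :
    HasDerivAt (fun s => A s i j) (A' t i j) t := by
  have h1 : HasDerivAt (fun s => A s i) (A' t i) t := hasDerivAt_pi.1 hA i
  exact hasDerivAt_pi.1 h1 j

private theorem matrix_mul_hasDerivAt {k : ℕ} {A B : ℝ → Matrix (Fin k) (Fin k) ℂ}
    {A' B' : Matrix (Fin k) (Fin k) ℂ} {t : ℝ}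
    (hA : HasDerivAt A A' t) (hB : HasDerivAt B B' t) :
    HasDerivAt (fun s => A s * B s) (A' * B t + A t * B') t := by
  refine hasDerivAt_pi.2 ?_
  intro i
  refine hasDerivAt_pi.2 ?_
  intro j
  have : ∀ s, (A s * B s) i j = ∑ l, A s i l * B s l j := fun s => Matrix.mul_apply
  simp only [this]
  have hgoal : (A' * B t + A t * B') i j
      = ∑ l, (A' i l * B t l j + A t i l * B' l j) := by
    simp [Matrix.add_apply, Matrix.mul_apply, Finset.sum_add_distrib]
  rw [hgoal]
  exact HasDerivAt.fun_sum fun l _ =>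
    (entry_hasDerivAt (A' := fun _ => A') hA i l).mul (entry_hasDerivAt (A' := fun _ => B') hB l j)

/-- Linearization of the system (3.47) of the paper via the positions (3.48), (3.49): if
`V̇_n = Σ_m a_{nm} V_m` and `U̇_n = V_n U_n` with `U_n` invertible, then
`Ü_n = U̇_n U_n⁻¹ U̇_n + Σ_m a_{nm} U̇_m U_m⁻¹ U_n`. -/
theorem linearization_of_eq_347 (k N : ℕ) (a : Fin N → Fin N → ℂ)
    (V U : Fin N → ℝ → Matrix (Fin k) (Fin k) ℂ)
    (hV : ∀ n t, HasDerivAt (V n) (∑ m, a n m • V m t) t)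
    (hUinv : ∀ n t, IsUnit (U n t))
    (hU : ∀ n t, HasDerivAt (U n) (V n t * U n t) t) :
    ∀ n t, HasDerivAt (fun s => V n s * U n s)
      ((V n t * U n t) * (U n t)⁻¹ * (V n t * U n t)
        + ∑ m, a n m • ((V m t * U m t) * (U m t)⁻¹ * U n t)) t := by
  intro n t
  have h := matrix_mul_hasDerivAt (hV n t) (hU n t)
  have hinv : ∀ m, U m t * (U m t)⁻¹ = 1 := fun m =>
    Matrix.mul_nonsing_inv _ ((Matrix.isUnit_iff_isUnit_det _).mp (hUinv m t))
  convert h using 1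
  have e1 : (V n t * U n t) * (U n t)⁻¹ * (V n t * U n t)
      = V n t * (V n t * U n t) := by
    rw [mul_assoc (V n t), hinv n, mul_one]
  have e2 : ∀ m, a n m • ((V m t * U m t) * (U m t)⁻¹ * U n t)
      = a n m • (V m t * U n t) := by
    intro m
    rw [mul_assoc (V m t), hinv m, mul_one]
  rw [e1, Finset.sum_congr rfl (fun m _ => e2 m)]
  rw [add_comm]
  congr 1
  simp [Finset.sum_mul, smul_mul_assoc]
end
end

section
/- Solvability of the matrix equation (3.93): let A, B, C, D be constant k×k complex matrices with D invertible, and let V : ℝ → (k×k complex matrices) be three times differentiable with V(t) invertible for all t, satisfying the linear ODE with constant coefficients V⃛ = V D A + V̇ B + V̈ C. Then the matrix M(t) := D⁻¹ V(t)⁻¹ V̇(t) satisfies M̈ = A + M B + Ṁ C + M D M C − Ṁ D M − 2 M D Ṁ − M D M D M. -/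
open Matrix

attribute [local instance] Matrix.normedAddCommGroup Matrix.normedSpace

noncomputable section

variable {k : ℕ}

lemma entryD {f : ℝ → Matrix (Fin k) (Fin k) ℂ} {f' : Matrix (Fin k) (Fin k) ℂ} {t : ℝ}
    (hf : HasDerivAt f f' t) (i j : Fin k) :
    HasDerivAt (fun s => f s i j) (f' i j) t :=
  hasDerivAt_pi.mp (hasDerivAt_pi.mp hf i) j

lemma ofEntries {f : ℝ → Matrix (Fin k) (Fin k) ℂ} {f' : Matrix (Fin k) (Fin k) ℂ} {t : ℝ}
    (h : ∀ i j, HasDerivAt (fun s => f s i j) (f' i j) t) : HasDerivAt f f' t :=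
  hasDerivAt_pi.mpr fun i => hasDerivAt_pi.mpr fun j => h i j

lemma matMul {f g : ℝ → Matrix (Fin k) (Fin k) ℂ} {f' g' : Matrix (Fin k) (Fin k) ℂ} {t : ℝ}
    (hf : HasDerivAt f f' t) (hg : HasDerivAt g g' t) :
    HasDerivAt (fun s => f s * g s) (f' * g t + f t * g') t := by
  apply ofEntries
  intro i j
  have key : ∀ l : Fin k, l ∈ Finset.univ → HasDerivAt (fun s => f s i l * g s l j)
      (f' i l * g t l j + f t i l * g' l j) t :=
    fun l _ => (entryD hf i l).mul (entryD hg l j)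
  simpa only [Matrix.add_apply, Matrix.mul_apply, Finset.sum_add_distrib]
    using HasDerivAt.fun_sum key

lemma detD {f : ℝ → Matrix (Fin k) (Fin k) ℂ} {t : ℝ}
    (hf : ∀ i j, DifferentiableAt ℝ (fun s => f s i j) t) :
    DifferentiableAt ℝ (fun s => (f s).det) t := by
  simp only [Matrix.det_apply']
  exact DifferentiableAt.fun_sum fun σ _ =>
    (DifferentiableAt.fun_finsetProd fun i _ => hf (σ i) i).const_mul _

lemma invD {V : ℝ → Matrix (Fin k) (Fin k) ℂ} {t : ℝ}
    (hVinv : IsUnit (V t)) (hd : ∀ i j, DifferentiableAt ℝ (fun s => V s i j) t) :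
    DifferentiableAt ℝ (fun s => (V s)⁻¹) t := by
  have hdet : DifferentiableAt ℝ (fun s => (V s).det) t := detD hd
  have hne : (V t).det ≠ 0 :=
    ((Matrix.isUnit_iff_isUnit_det _).mp hVinv).ne_zero
  have hadj : DifferentiableAt ℝ (fun s => (V s).adjugate) t := by
    refine differentiableAt_pi.mpr fun i => ?_
    refine differentiableAt_pi.mpr fun j => ?_
    have : (fun s => (V s).adjugate i j)
        = fun s => ((V s).updateRow j (Pi.single i 1)).det := by
      funext s; rw [Matrix.adjugate_apply]
    rw [this]
    apply detD
    intro a b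
    by_cases hab : a = j
    · subst hab
      simp only [Matrix.updateRow_self]
      exact differentiableAt_const _
    · simp only [Matrix.updateRow_ne hab]
      exact hd a b
  have : (fun s => (V s)⁻¹) = fun s => ((V s).det)⁻¹ • (V s).adjugate := by
    funext s
    rw [Matrix.inv_def, Ring.inverse_eq_inv']
  rw [this]
  exact (hdet.inv hne).smul hadj

/-- Solvability of the matrix equation (3.93) of the paper via the position (3.94) and the
linear equation (3.95): if `V⃛ = V D A + V̇ B + V̈ C` with `V` invertible and `D` invertible,
then `M := D⁻¹ V⁻¹ V̇` satisfies
`M̈ = A + M B + Ṁ C + M D M C − Ṁ D M − 2 M D Ṁ − M D M D M`. -/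
theorem solvability_of_eq_393 (k : ℕ)
    (A B C D : Matrix (Fin k) (Fin k) ℂ) (hD : IsUnit D)
    (V V' V'' V''' : ℝ → Matrix (Fin k) (Fin k) ℂ)
    (hVinv : ∀ t, IsUnit (V t))
    (hV : ∀ t, HasDerivAt V (V' t) t)
    (hV' : ∀ t, HasDerivAt V' (V'' t) t)
    (hV'' : ∀ t, HasDerivAt V'' (V''' t) t)
    (hODE : ∀ t, V''' t = V t * D * A + V' t * B + V'' t * C)
    (M : ℝ → Matrix (Fin k) (Fin k) ℂ)
    (hM : ∀ t, M t = D⁻¹ * ((V t)⁻¹ * V' t)) :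
    (∀ t, DifferentiableAt ℝ M t) ∧
    ∀ t, HasDerivAt (deriv M)
      (A + M t * B + deriv M t * C + M t * D * M t * C - deriv M t * D * M t
        - (2 : ℂ) • (M t * D * deriv M t) - M t * D * M t * D * M t) t := by
  set W : ℝ → Matrix (Fin k) (Fin k) ℂ := fun t => (V t)⁻¹ with hWdef
  have hdet : ∀ t, IsUnit (V t).det := fun t => (Matrix.isUnit_iff_isUnit_det _).mp (hVinv t)
  have hDdet : IsUnit D.det := (Matrix.isUnit_iff_isUnit_det _).mp hD
  have hWdiff : ∀ t, DifferentiableAt ℝ W t := fun t =>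
    invD (hVinv t) (fun i j => (entryD (hV t) i j).differentiableAt)
  have hWV : ∀ t, W t * V t = 1 := fun t => Matrix.nonsing_inv_mul _ (hdet t)
  have hVW : ∀ t, V t * W t = 1 := fun t => Matrix.mul_nonsing_inv _ (hdet t)
  have hW : ∀ t, HasDerivAt W (-(W t * V' t * W t)) t := by
    intro t
    have h1 : HasDerivAt (fun s => V s * W s) (V' t * W t + V t * deriv W t) t :=
      matMul (hV t) (hWdiff t).hasDerivAt
    have h2 : HasDerivAt (fun s => V s * W s) 0 t := by
      have he : (fun s => V s * W s) = fun _ => (1 : Matrix (Fin k) (Fin k) ℂ) := funext hVW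
      rw [he]; exact hasDerivAt_const _ _
    have h3 : V' t * W t + V t * deriv W t = 0 := h1.unique h2
    have h5 : V t * deriv W t = -(V' t * W t) := by
      rw [add_comm] at h3; exact eq_neg_of_add_eq_zero_left h3
    have h4 : deriv W t = -(W t * V' t * W t) := by
      calc deriv W t = (W t * V t) * deriv W t := by rw [hWV, one_mul]
        _ = W t * (V t * deriv W t) := by rw [mul_assoc]
        _ = W t * -(V' t * W t) := by rw [h5]
        _ = -(W t * V' t * W t) := by rw [mul_neg, mul_assoc]
    rw [← h4]; exact (hWdiff t).hasDerivAt
  have hMeq : M = fun t => D⁻¹ * (W t * V' t) := funext hM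
  have hM1 : ∀ t, HasDerivAt M
      (D⁻¹ * (-(W t * V' t * W t) * V' t + W t * V'' t)) t := by
    intro t
    rw [hMeq]
    have h := matMul (hasDerivAt_const t (D⁻¹ : Matrix (Fin k) (Fin k) ℂ))
      (matMul (hW t) (hV' t))
    simpa using h
  have hdiff : ∀ t, DifferentiableAt ℝ M t := fun t => (hM1 t).differentiableAt
  have hderivM : deriv M = fun t => D⁻¹ * (-(W t * V' t * W t) * V' t + W t * V'' t) :=
    funext fun t => (hM1 t).deriv
  refine ⟨hdiff, fun t => ?_⟩
  rw [hderivM]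
  have hP : HasDerivAt (fun s => -(W s * V' s * W s) * V' s + W s * V'' s)
      ((-((-(W t * V' t * W t) * V' t + W t * V'' t) * W t
          + (W t * V' t) * -(W t * V' t * W t))) * V' t
        + -(W t * V' t * W t) * V'' t
        + (-(W t * V' t * W t) * V'' t + W t * V''' t)) t :=
    HasDerivAt.add
      (matMul (HasDerivAt.neg (matMul (matMul (hW t) (hV' t)) (hW t))) (hV' t))
      (matMul (hW t) (hV'' t))
  have hfin := matMul (hasDerivAt_const t (D⁻¹ : Matrix (Fin k) (Fin k) ℂ)) hP
  have cW : ∀ X : Matrix (Fin k) (Fin k) ℂ, W t * (V t * X) = X := fun X => by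
    rw [← mul_assoc, hWV, one_mul]
  have cD1 : ∀ X : Matrix (Fin k) (Fin k) ℂ, D⁻¹ * (D * X) = X := fun X => by
    rw [← mul_assoc, Matrix.nonsing_inv_mul _ hDdet, one_mul]
  have cD2 : ∀ X : Matrix (Fin k) (Fin k) ℂ, D * (D⁻¹ * X) = X := fun X => by
    rw [← mul_assoc, Matrix.mul_nonsing_inv _ hDdet, one_mul]
  convert hfin using 1
  simp only [hM, hODE, hderivM, zero_mul, zero_add, two_smul]
  simp only [mul_add, add_mul, neg_mul, mul_neg, neg_neg, neg_add, sub_eq_add_neg]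
  simp only [mul_assoc, cW, cD1, cD2]
  abel
end
end

section
/- From the linear lattice to a matrix Riccati lattice: let A_n, B_n, C_n be constant k×k complex matrices indexed by an integer n, and let W_n : ℝ → (k×k complex matrices) be differentiable with W_n(t) invertible for all n and t, satisfying the linear system Ẇ_n = A_n W_n + B_n W_{n+1} + C_n W_{n−1}. Then the matrices V_n(t) := W_{n+1}(t) W_n(t)⁻¹ are invertible and satisfy the nonlinear system V̇_n = A_{n+1} V_n − V_n A_n + B_{n+1} V_{n+1} V_n − V_n B_n V_n + C_{n+1} − V_n C_n V_{n−1}⁻¹. -/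
open Matrix

attribute [local instance] Matrix.normedAddCommGroup Matrix.normedSpace

noncomputable section

private def mulL (k : ℕ) :
    Matrix (Fin k) (Fin k) ℂ →L[ℝ] Matrix (Fin k) (Fin k) ℂ →L[ℝ] Matrix (Fin k) (Fin k) ℂ :=
  LinearMap.toContinuousLinearMap
    { toFun := fun a => LinearMap.toContinuousLinearMap (LinearMap.mulLeft ℝ a)
      map_add' := fun a b => by ext x; simp [add_mul]
      map_smul' := fun c a => by ext x; simp [smul_mul_assoc] }

lemma mulL_apply (k : ℕ) (a b : Matrix (Fin k) (Fin k) ℂ) : mulL k a b = a * b := rfl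

lemma tendsto_matmul {k : ℕ} {α : Type*} {l : Filter α} {f g : α → Matrix (Fin k) (Fin k) ℂ}
    {a b : Matrix (Fin k) (Fin k) ℂ} (hf : Filter.Tendsto f l (nhds a))
    (hg : Filter.Tendsto g l (nhds b)) :
    Filter.Tendsto (fun s => f s * g s) l (nhds (a * b)) := by
  have hc := (mulL k).isBoundedBilinearMap.continuous
  have := (hc.tendsto (a, b)).comp (hf.prodMk_nhds hg)
  exact this

lemma hasDerivAt_matmul {k : ℕ} {f g : ℝ → Matrix (Fin k) (Fin k) ℂ}
    {f' g' : Matrix (Fin k) (Fin k) ℂ} {t : ℝ}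
    (hf : HasDerivAt f f' t) (hg : HasDerivAt g g' t) :
    HasDerivAt (fun s => f s * g s) (f' * g t + f t * g') t := by
  have h := ((mulL k).isBoundedBilinearMap.hasFDerivAt (f t, g t)).comp_hasDerivAt t (hf.prodMk hg)
  have he : ((mulL k).isBoundedBilinearMap.deriv (f t, g t)) (f', g') = f' * g t + f t * g' := by
    rw [IsBoundedBilinearMap.deriv_apply]
    exact add_comm (f t * g') (f' * g t)
  rw [he] at h
  exact h

lemma hasDerivAt_matinv {k : ℕ} {g : ℝ → Matrix (Fin k) (Fin k) ℂ}
    {g' : Matrix (Fin k) (Fin k) ℂ} {t : ℝ}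
    (hg : HasDerivAt g g' t) (hu : ∀ s, IsUnit (g s)) :
    HasDerivAt (fun s => (g s)⁻¹) (-((g t)⁻¹ * g' * (g t)⁻¹)) t := by
  have hdet : ∀ s, IsUnit (g s).det := fun s => (Matrix.isUnit_iff_isUnit_det _).mp (hu s)
  have hcont : ContinuousAt (fun s => (g s)⁻¹) t := by
    have h1 : ContinuousAt Inv.inv (g t) := by
      apply continuousAt_matrix_inv
      rw [Ring.inverse_eq_inv']
      exact continuousAt_inv₀ (hdet t).ne_zero
    exact h1.comp hg.continuousAt
  refine hasDerivAt_iff_tendsto_slope.mpr ?_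
  have hslope : Filter.Tendsto (slope g t) (nhdsWithin t {t}ᶜ) (nhds g') :=
    hasDerivAt_iff_tendsto_slope.mp hg
  have hinv : Filter.Tendsto (fun s => (g s)⁻¹) (nhdsWithin t {t}ᶜ) (nhds (g t)⁻¹) :=
    hcont.tendsto.mono_left nhdsWithin_le_nhds
  have hlim : Filter.Tendsto (fun s => (g s)⁻¹ * -slope g t s * (g t)⁻¹) (nhdsWithin t {t}ᶜ)
      (nhds ((g t)⁻¹ * -g' * (g t)⁻¹)) :=
    tendsto_matmul (tendsto_matmul hinv hslope.neg) tendsto_const_nhds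
  have heq : -((g t)⁻¹ * g' * (g t)⁻¹) = (g t)⁻¹ * -g' * (g t)⁻¹ := by
    simp [neg_mul, mul_neg]
  rw [heq]
  refine hlim.congr' ?_
  filter_upwards [self_mem_nhdsWithin] with s hs
  have h1 : (g s)⁻¹ * g s = 1 := Matrix.nonsing_inv_mul _ (hdet s)
  have h2 : g t * (g t)⁻¹ = 1 := Matrix.mul_nonsing_inv _ (hdet t)
  have hdiff : (g s)⁻¹ - (g t)⁻¹ = (g s)⁻¹ * (g t - g s) * (g t)⁻¹ := by
    rw [mul_sub, sub_mul, mul_assoc _ (g t) _, h2, mul_one, h1, one_mul]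
  rw [slope_def_module, slope_def_module, hdiff, ← smul_neg, neg_sub, mul_smul_comm,
    smul_mul_assoc]

/-- Derivation (Appendix E of the paper) of the solvable nonlinear matrix lattice (E.3)
from the linear matrix lattice (E.1) via the position (E.2): if
`Ẇ_n = A_n W_n + B_n W_{n+1} + C_n W_{n−1}` with each `W_n(t)` invertible, then
`V_n := W_{n+1} W_n⁻¹` is invertible and satisfies
`V̇_n = A_{n+1} V_n − V_n A_n + B_{n+1} V_{n+1} V_n − V_n B_n V_n + C_{n+1} − V_n C_n V_{n−1}⁻¹`. -/
theorem linear_lattice_to_riccati_lattice (k : ℕ)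
    (A B C : ℤ → Matrix (Fin k) (Fin k) ℂ)
    (W : ℤ → ℝ → Matrix (Fin k) (Fin k) ℂ)
    (hWinv : ∀ n t, IsUnit (W n t))
    (hW : ∀ n t, HasDerivAt (W n)
      (A n * W n t + B n * W (n + 1) t + C n * W (n - 1) t) t)
    (V : ℤ → ℝ → Matrix (Fin k) (Fin k) ℂ)
    (hV : ∀ n t, V n t = W (n + 1) t * (W n t)⁻¹) :
    (∀ n t, IsUnit (V n t)) ∧
    ∀ n t, HasDerivAt (V n)
      (A (n + 1) * V n t - V n t * A n + B (n + 1) * (V (n + 1) t * V n t)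
        - V n t * B n * V n t + C (n + 1) - V n t * C n * (V (n - 1) t)⁻¹) t := by
  constructor
  · intro n t
    rw [hV]
    exact (hWinv (n + 1) t).mul (Matrix.isUnit_nonsing_inv_iff.mpr (hWinv n t))
  · intro n t
    have hdet : ∀ m s, IsUnit ((W m s).det) :=
      fun m s => (Matrix.isUnit_iff_isUnit_det _).mp (hWinv m s)
    have hfun : V n = fun s => W (n + 1) s * (W n s)⁻¹ := funext fun s => hV n s
    have hinv := hasDerivAt_matinv (hW n t) (fun s => hWinv n s)
    have hmul := hasDerivAt_matmul (hW (n + 1) t) hinv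
    rw [hfun]
    convert hmul using 1
    -- rewrite all V's in terms of W's
    have hVm : (V (n - 1) t)⁻¹ = W (n - 1) t * (W n t)⁻¹ := by
      rw [hV (n - 1) t]
      have he : n - 1 + 1 = n := by omega
      rw [he, Matrix.mul_inv_rev, Matrix.nonsing_inv_nonsing_inv _ (hdet (n - 1) t)]
    beta_reduce
    rw [hV (n + 1) t, hVm]
    have hi1 : n + 1 - 1 = n := by omega
    rw [hi1]
    have h1 : W n t * (W n t)⁻¹ = 1 := Matrix.mul_nonsing_inv _ (hdet n t)
    have h3 : (W (n + 1) t)⁻¹ * (W (n + 1) t * (W n t)⁻¹) = (W n t)⁻¹ := by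
      rw [← mul_assoc, Matrix.nonsing_inv_mul _ (hdet (n + 1) t), one_mul]
    simp only [mul_add, add_mul, mul_sub, sub_mul, neg_mul, mul_neg, mul_one, one_mul, mul_assoc,
      h1, h3]
    abel
end
end
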